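/- Let d ≥ 1 and let a : Fin d → ℕ be a partition of length d (a nonincreasing sequence of natural numbers) with |a| > 0, and set μ(d) = lcm(1,2,…,d). Then there exists a finite set σ(a) of partitions of length d such that every partition b : Fin d → ℕ lying in C(a) (i.e. satisfying |a|·(b 0 + … + b n) ≤ |b|·(a 0 + … + a n) for every n < d) can be written as b = c + Σ_L m_L · v(L, μ(d)·a), where c ∈ σ(a), the sum runs over all compositions L of d, and each m_L is a nonnegative integer. -/

import Mathlib

open Finset

/-- `vSeq L a` is the sequence `v(L,a)` of length `d`: it is constant on each block of the
composition `L` of `d`, and its value on block `i` is the average of `a` over that block,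
i.e. (sum of `a` over block `i`) divided by the length `lᵢ` of block `i`. -/
noncomputable def vSeq {d : ℕ} (L : Composition d) (a : Fin d → ℚ) : Fin d → ℚ :=
  fun i => (∑ j : Fin d, if L.index j = L.index i then a j else 0) / (L.blocksFun (L.index i) : ℚ)

/-- `μ(d) = lcm(1, 2, …, d)`. -/
def lcmUpTo (d : ℕ) : ℕ := (Finset.Icc 1 d).lcm id

namespace ConeDecomp
variable {d : ℕ}

/-- partial sum of the first `n` entries -/
def PS (f : Fin d → ℚ) (n : ℕ) : ℚ :=
  ∑ i ∈ Finset.range n, if h : i < d then f ⟨i, h⟩ else 0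

lemma PS_zero (f : Fin d → ℚ) : PS f 0 = 0 := by simp [PS]

lemma PS_succ (f : Fin d → ℚ) {n : ℕ} (h : n < d) :
    PS f (n + 1) = PS f n + f ⟨n, h⟩ := by
  rw [PS, Finset.sum_range_succ, dif_pos h]; rfl

lemma PS_univ (f : Fin d → ℚ) : PS f d = ∑ i, f i := by
  rw [PS, ← Fin.sum_univ_eq_sum_range (fun i => if h : i < d then f ⟨i, h⟩ else 0) d]
  exact Finset.sum_congr rfl (fun i _ => by rw [dif_pos i.isLt])

lemma sum_filter_lt (f : Fin d → ℚ) {b : ℕ} (hb : b ≤ d) :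
    (∑ j : Fin d, if (j : ℕ) < b then f j else 0) = PS f b := by
  have : (∑ j : Fin d, if (j : ℕ) < b then f j else 0)
      = ∑ i ∈ Finset.range d, (if i < b then (if h : i < d then f ⟨i, h⟩ else 0) else 0) := by
    rw [← Fin.sum_univ_eq_sum_range (fun i => if i < b then (if h : i < d then f ⟨i, h⟩ else 0) else 0) d]
    refine Finset.sum_congr rfl (fun j _ => ?_)
    by_cases hj : (j : ℕ) < b
    · rw [if_pos hj, if_pos hj, dif_pos j.isLt]
    · rw [if_neg hj, if_neg hj]
  rw [this, ← Finset.sum_filter, PS]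
  congr 1
  ext i
  simp only [Finset.mem_filter, Finset.mem_range]
  omega

lemma index_eq_iff (L : Composition d) (j : Fin d) (k : Fin L.length) :
    L.index j = k ↔ L.sizeUpTo k ≤ (j : ℕ) ∧ (j : ℕ) < L.sizeUpTo (k + 1) := by
  constructor
  · rintro rfl
    exact ⟨L.sizeUpTo_index_le j, L.lt_sizeUpTo_index_succ j⟩
  · rintro ⟨h1, h2⟩
    rcases lt_trichotomy ((L.index j : ℕ)) (k : ℕ) with h | h | h
    · exfalso
      have h3 : L.sizeUpTo ((L.index j : ℕ) + 1) ≤ L.sizeUpTo k := L.monotone_sizeUpTo (by omega)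
      have h4 := L.lt_sizeUpTo_index_succ j
      rw [Fin.val_succ] at h4
      omega
    · exact Fin.ext h
    · exfalso
      have : L.sizeUpTo ((k : ℕ) + 1) ≤ L.sizeUpTo (L.index j) := L.monotone_sizeUpTo (by omega)
      have := L.sizeUpTo_index_le j
      omega

lemma sum_block (L : Composition d) (f : Fin d → ℚ) (k : Fin L.length) :
    (∑ j : Fin d, if L.index j = k then f j else 0)
      = PS f (L.sizeUpTo (k + 1)) - PS f (L.sizeUpTo k) := by
  have hab : L.sizeUpTo (k : ℕ) ≤ L.sizeUpTo ((k : ℕ) + 1) := L.monotone_sizeUpTo (by omega)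
  have key : ∀ j : Fin d, (if L.index j = k then f j else 0)
      = (if (j : ℕ) < L.sizeUpTo ((k : ℕ) + 1) then f j else 0)
        - (if (j : ℕ) < L.sizeUpTo (k : ℕ) then f j else 0) := by
    intro j
    by_cases h1 : (j : ℕ) < L.sizeUpTo (k : ℕ)
    · rw [if_pos h1, if_pos (lt_of_lt_of_le h1 hab),
        if_neg (by rw [index_eq_iff]; omega)]
      ring
    · by_cases h2 : (j : ℕ) < L.sizeUpTo ((k : ℕ) + 1)
      · rw [if_pos h2, if_neg h1, if_pos (by rw [index_eq_iff]; omega)]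
        ring
      · rw [if_neg h2, if_neg h1, if_neg (by rw [index_eq_iff]; omega)]
        ring
  rw [Finset.sum_congr rfl (fun j _ => key j), Finset.sum_sub_distrib,
    sum_filter_lt f (L.sizeUpTo_le _), sum_filter_lt f (L.sizeUpTo_le _)]

lemma PS_one {n : ℕ} (hn : n ≤ d) : PS (fun _ : Fin d => (1 : ℚ)) n = n := by
  rw [PS]
  rw [Finset.sum_congr rfl (fun i hi => dif_pos (lt_of_lt_of_le (Finset.mem_range.1 hi) hn))]
  simp

lemma vSeq_apply (L : Composition d) (y : Fin d → ℚ) (i : Fin d) :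
    vSeq L y i = (PS y (L.sizeUpTo (L.index i + 1)) - PS y (L.sizeUpTo (L.index i)))
      / (L.blocksFun (L.index i) : ℚ) := by
  rw [vSeq, sum_block]

lemma vSeq_congr (L : Composition d) (y : Fin d → ℚ) {i j : Fin d}
    (h : L.index j = L.index i) : vSeq L y j = vSeq L y i := by
  rw [vSeq_apply, vSeq_apply, h]

lemma blocksFun_ne (L : Composition d) (k : Fin L.length) : (L.blocksFun k : ℚ) ≠ 0 := by
  have := L.one_le_blocksFun k
  positivity

lemma sum_block_vSeq (L : Composition d) (y : Fin d → ℚ) (k : Fin L.length) :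
    (∑ j : Fin d, if L.index j = k then vSeq L y j else 0)
      = PS y (L.sizeUpTo (k + 1)) - PS y (L.sizeUpTo k) := by
  have step : ∀ j : Fin d, (if L.index j = k then vSeq L y j else 0)
      = ((PS y (L.sizeUpTo (k + 1)) - PS y (L.sizeUpTo k)) / (L.blocksFun k : ℚ))
        * (if L.index j = k then (1 : ℚ) else 0) := by
    intro j
    by_cases h : L.index j = k
    · rw [if_pos h, if_pos h, mul_one, vSeq_apply, h]
    · rw [if_neg h, if_neg h, mul_zero]
  rw [Finset.sum_congr rfl fun j _ => step j, ← Finset.mul_sum, sum_block,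
    PS_one (L.sizeUpTo_le _), PS_one (L.sizeUpTo_le _), L.sizeUpTo_succ' k]
  have h := blocksFun_ne L k
  push_cast
  field_simp
  ring

lemma PS_vSeq_boundary (L : Composition d) (y : Fin d → ℚ) :
    ∀ k : ℕ, k ≤ L.length → PS (vSeq L y) (L.sizeUpTo k) = PS y (L.sizeUpTo k) := by
  intro k
  induction k with
  | zero => intro _; rw [Composition.sizeUpTo_zero, PS_zero, PS_zero]
  | succ k ih =>
    intro hk
    have hk' : k < L.length := hk
    have h1 := sum_block L (vSeq L y) ⟨k, hk'⟩
    have h2 := sum_block_vSeq L y ⟨k, hk'⟩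
    have := ih (le_of_lt hk')
    simp only at h1 h2
    linarith [h1, h2.symm.trans h1]

lemma PS_vSeq_univ (L : Composition d) (y : Fin d → ℚ) :
    PS (vSeq L y) d = PS y d := by
  have := PS_vSeq_boundary L y L.length le_rfl
  rwa [Composition.sizeUpTo_length] at this



lemma PS_sub_eq_sum_Ico (f : Fin d → ℚ) {a b : ℕ} (hab : a ≤ b) :
    PS f b - PS f a = ∑ i ∈ Finset.Ico a b, if h : i < d then f ⟨i, h⟩ else 0 := by
  rw [PS, PS, Finset.sum_Ico_eq_sub _ hab]

/-- lower bound: block sum ≥ length * (value at last element) -/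
lemma block_sum_ge (L : Composition d) {y : Fin d → ℚ} (hy : Antitone y) (k : Fin L.length)
    (hlast : L.sizeUpTo ((k : ℕ) + 1) - 1 < d) :
    (L.blocksFun k : ℚ) * y ⟨L.sizeUpTo ((k : ℕ) + 1) - 1, hlast⟩
      ≤ PS y (L.sizeUpTo ((k : ℕ) + 1)) - PS y (L.sizeUpTo (k : ℕ)) := by
  have hab : L.sizeUpTo (k : ℕ) ≤ L.sizeUpTo ((k : ℕ) + 1) := L.monotone_sizeUpTo (by omega)
  rw [PS_sub_eq_sum_Ico y hab]
  have hb : 0 < L.blocksFun k := L.one_le_blocksFun k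
  have hsz := L.sizeUpTo_succ' k
  have card : (Finset.Ico (L.sizeUpTo (k : ℕ)) (L.sizeUpTo ((k : ℕ) + 1))).card
      = L.blocksFun k := by rw [Nat.card_Ico]; omega
  have : ∀ i ∈ Finset.Ico (L.sizeUpTo (k : ℕ)) (L.sizeUpTo ((k : ℕ) + 1)),
      y ⟨L.sizeUpTo ((k : ℕ) + 1) - 1, hlast⟩ ≤ (if h : i < d then y ⟨i, h⟩ else 0) := by
    intro i hi
    rw [Finset.mem_Ico] at hi
    have hid : i < d := by
      have := L.sizeUpTo_le ((k : ℕ) + 1); omega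
    rw [dif_pos hid]
    exact hy (show (⟨i, hid⟩ : Fin d) ≤ ⟨L.sizeUpTo ((k : ℕ) + 1) - 1, hlast⟩ by
      rw [Fin.le_def]; simp; omega)
  calc (L.blocksFun k : ℚ) * y ⟨L.sizeUpTo ((k : ℕ) + 1) - 1, hlast⟩
      = (Finset.Ico (L.sizeUpTo (k : ℕ)) (L.sizeUpTo ((k : ℕ) + 1))).card
        • y ⟨L.sizeUpTo ((k : ℕ) + 1) - 1, hlast⟩ := by rw [card, nsmul_eq_mul]
    _ ≤ _ := Finset.card_nsmul_le_sum _ _ _ this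

/-- upper bound: block sum ≤ length * (value at first element) -/
lemma block_sum_le (L : Composition d) {y : Fin d → ℚ} (hy : Antitone y) (k : Fin L.length)
    (hfirst : L.sizeUpTo (k : ℕ) < d) :
    PS y (L.sizeUpTo ((k : ℕ) + 1)) - PS y (L.sizeUpTo (k : ℕ))
      ≤ (L.blocksFun k : ℚ) * y ⟨L.sizeUpTo (k : ℕ), hfirst⟩ := by
  have hab : L.sizeUpTo (k : ℕ) ≤ L.sizeUpTo ((k : ℕ) + 1) := L.monotone_sizeUpTo (by omega)
  rw [PS_sub_eq_sum_Ico y hab]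
  have hsz := L.sizeUpTo_succ' k
  have card : (Finset.Ico (L.sizeUpTo (k : ℕ)) (L.sizeUpTo ((k : ℕ) + 1))).card
      = L.blocksFun k := by rw [Nat.card_Ico]; omega
  have : ∀ i ∈ Finset.Ico (L.sizeUpTo (k : ℕ)) (L.sizeUpTo ((k : ℕ) + 1)),
      (if h : i < d then y ⟨i, h⟩ else 0) ≤ y ⟨L.sizeUpTo (k : ℕ), hfirst⟩ := by
    intro i hi
    rw [Finset.mem_Ico] at hi
    have hid : i < d := by
      have := L.sizeUpTo_le ((k : ℕ) + 1); omega
    rw [dif_pos hid]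
    exact hy (show (⟨L.sizeUpTo (k : ℕ), hfirst⟩ : Fin d) ≤ ⟨i, hid⟩ by
      rw [Fin.le_def]; simpa using hi.1)
  calc _ ≤ (Finset.Ico (L.sizeUpTo (k : ℕ)) (L.sizeUpTo ((k : ℕ) + 1))).card
        • y ⟨L.sizeUpTo (k : ℕ), hfirst⟩ := Finset.sum_le_card_nsmul _ _ _ this
    _ = _ := by rw [card, nsmul_eq_mul]

lemma index_mono (L : Composition d) : Monotone L.index := by
  intro i j hij
  by_contra h
  push_neg at h
  have h1 : (L.index j : ℕ) + 1 ≤ (L.index i : ℕ) := h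
  have h2 : L.sizeUpTo ((L.index j : ℕ) + 1) ≤ L.sizeUpTo (L.index i : ℕ) :=
    L.monotone_sizeUpTo h1
  have h3 := L.lt_sizeUpTo_index_succ j
  rw [Fin.val_succ] at h3
  have h4 := L.sizeUpTo_index_le i
  have : (i : ℕ) ≤ j := hij
  omega

lemma vSeq_antitone (L : Composition d) {y : Fin d → ℚ} (hy : Antitone y) :
    Antitone (vSeq L y) := by
  -- first prove for consecutive indices
  have cons : ∀ (i : ℕ) (h1 : i + 1 < d), vSeq L y ⟨i + 1, h1⟩ ≤ vSeq L y ⟨i, by omega⟩ := by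
    intro i h1
    set i0 : Fin d := ⟨i, by omega⟩
    set i1 : Fin d := ⟨i + 1, h1⟩
    by_cases h : L.index i1 = L.index i0
    · rw [vSeq_congr L y h]
    · -- consecutive blocks
      set k0 := L.index i0
      set k1 := L.index i1
      have hk01 : (k0 : ℕ) < (k1 : ℕ) := by
        rcases lt_or_eq_of_le (index_mono L (show i0 ≤ i1 by rw [Fin.le_def]; simp [i0, i1])) with h' | h'
        · exact h'
        · exact absurd h'.symm h
      have e1 : L.sizeUpTo (k1 : ℕ) ≤ i + 1 := L.sizeUpTo_index_le i1
      have e2 : (i : ℕ) < L.sizeUpTo ((k0 : ℕ) + 1) := by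
        have := L.lt_sizeUpTo_index_succ i0; rwa [Fin.val_succ] at this
      have e3 : L.sizeUpTo (k0 : ℕ) ≤ i := L.sizeUpTo_index_le i0
      have e4 : L.sizeUpTo ((k0 : ℕ) + 1) ≤ L.sizeUpTo (k1 : ℕ) := L.monotone_sizeUpTo (by omega)
      have e5 : L.sizeUpTo ((k0 : ℕ) + 1) = i + 1 := by omega
      have e6 : L.sizeUpTo (k1 : ℕ) = i + 1 := by omega
      -- value on block k0 ≥ y at its last element (= position i)
      have hlast : L.sizeUpTo ((k0 : ℕ) + 1) - 1 < d := by omega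
      have hfirst : L.sizeUpTo (k1 : ℕ) < d := by omega
      have hA := block_sum_ge L hy k0 hlast
      have hB := block_sum_le L hy k1 hfirst
      have hbpos0 : (0:ℚ) < (L.blocksFun k0 : ℚ) := by
        have := L.one_le_blocksFun k0; positivity
      have hbpos1 : (0:ℚ) < (L.blocksFun k1 : ℚ) := by
        have := L.one_le_blocksFun k1; positivity
      have hyy : y ⟨L.sizeUpTo (k1 : ℕ), hfirst⟩ ≤ y ⟨L.sizeUpTo ((k0 : ℕ) + 1) - 1, hlast⟩ := by
        apply hy
        rw [Fin.le_def]
        simp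
        omega
      rw [vSeq_apply, vSeq_apply]
      show (PS y (L.sizeUpTo ((k1:ℕ) + 1)) - PS y (L.sizeUpTo (k1:ℕ))) / (L.blocksFun k1 : ℚ)
        ≤ (PS y (L.sizeUpTo ((k0:ℕ) + 1)) - PS y (L.sizeUpTo (k0:ℕ))) / (L.blocksFun k0 : ℚ)
      rw [div_le_div_iff₀ hbpos1 hbpos0]
      calc (PS y (L.sizeUpTo ((k1:ℕ) + 1)) - PS y (L.sizeUpTo (k1:ℕ))) * (L.blocksFun k0 : ℚ)
          ≤ ((L.blocksFun k1 : ℚ) * y ⟨L.sizeUpTo (k1 : ℕ), hfirst⟩) * (L.blocksFun k0 : ℚ) := by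
            apply mul_le_mul_of_nonneg_right hB (le_of_lt hbpos0)
        _ ≤ (L.blocksFun k1 : ℚ) * (((L.blocksFun k0 : ℚ)) * y ⟨L.sizeUpTo ((k0 : ℕ) + 1) - 1, hlast⟩) := by
            rw [mul_assoc, mul_comm (y _)]
            apply mul_le_mul_of_nonneg_left _ (le_of_lt hbpos1)
            exact mul_le_mul_of_nonneg_left hyy (le_of_lt hbpos0)
        _ ≤ (PS y (L.sizeUpTo ((k0:ℕ) + 1)) - PS y (L.sizeUpTo (k0:ℕ))) * (L.blocksFun k1 : ℚ) := by
            rw [mul_comm]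
            exact mul_le_mul_of_nonneg_right hA (le_of_lt hbpos1)
  -- now general antitone
  have step : ∀ (n : ℕ) (hn : n < d) (i : Fin d), (i : ℕ) ≤ n → vSeq L y ⟨n, hn⟩ ≤ vSeq L y i := by
    intro n
    induction n with
    | zero => intro hn i hi
              have : i = ⟨0, hn⟩ := by apply Fin.ext; simp; omega
              rw [this]
    | succ n ih =>
      intro hn i hi
      rcases Nat.lt_or_ge (i : ℕ) (n + 1) with h' | h'
      · calc vSeq L y ⟨n + 1, hn⟩ ≤ vSeq L y ⟨n, by omega⟩ := cons n hn
          _ ≤ vSeq L y i := ih (by omega) i (by omega)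
      · have : i = ⟨n + 1, hn⟩ := by apply Fin.ext; simp; omega
        rw [this]
  intro i j hij
  exact step (j : ℕ) j.isLt i hij

/-- if the block containing `j` is a singleton then `vSeq L y j = y j` -/
lemma vSeq_singleton (L : Composition d) (y : Fin d → ℚ) (j : Fin d)
    (h : L.sizeUpTo ((L.index j : ℕ) + 1) = L.sizeUpTo (L.index j : ℕ) + 1) :
    vSeq L y j = y j := by
  have hb : L.blocksFun (L.index j) = 1 := by
    have := L.sizeUpTo_succ' (L.index j); omega
  have hj1 : L.sizeUpTo (L.index j : ℕ) ≤ (j : ℕ) := L.sizeUpTo_index_le j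
  have hj2 : (j : ℕ) < L.sizeUpTo ((L.index j : ℕ) + 1) := by
    have := L.lt_sizeUpTo_index_succ j; rwa [Fin.val_succ] at this
  have hjval : (j : ℕ) = L.sizeUpTo (L.index j : ℕ) := by omega
  rw [vSeq_apply, hb, h]
  rw [PS_succ y (show L.sizeUpTo (L.index j : ℕ) < d by omega)]
  have : (⟨L.sizeUpTo (L.index j : ℕ), by omega⟩ : Fin d) = j := by
    apply Fin.ext; simp [hjval]
  rw [this]
  simp


/-- gap between consecutive entries (0 out of range) -/
def gp (x : Fin d → ℚ) (i : ℕ) : ℚ :=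
  if h : i + 1 < d then x ⟨i, by omega⟩ - x ⟨i + 1, h⟩ else 0

lemma gp_nonneg {x : Fin d → ℚ} (hx : Antitone x) (i : ℕ) : 0 ≤ gp x i := by
  rw [gp]
  split
  · rename_i h
    have : x ⟨i + 1, h⟩ ≤ x ⟨i, by omega⟩ := hx (by rw [Fin.le_def]; simp)
    linarith
  · exact le_refl 0

lemma antitone_of_gp {x : Fin d → ℚ} (h : ∀ i, 0 ≤ gp x i) : Antitone x := by
  have cons : ∀ (i : ℕ) (h1 : i + 1 < d), x ⟨i + 1, h1⟩ ≤ x ⟨i, by omega⟩ := by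
    intro i h1
    have := h i
    rw [gp, dif_pos h1] at this
    linarith
  have step : ∀ (n : ℕ) (hn : n < d) (i : Fin d), (i : ℕ) ≤ n → x ⟨n, hn⟩ ≤ x i := by
    intro n
    induction n with
    | zero =>
      intro hn i hi
      have : i = ⟨0, hn⟩ := by apply Fin.ext; simp; omega
      rw [this]
    | succ n ih =>
      intro hn i hi
      rcases Nat.lt_or_ge (i : ℕ) (n + 1) with h' | h'
      · calc x ⟨n + 1, hn⟩ ≤ x ⟨n, by omega⟩ := cons n hn
          _ ≤ x i := ih (by omega) i (by omega)
      · have : i = ⟨n + 1, hn⟩ := by apply Fin.ext; simp; omega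
        rw [this]
  intro i j hij
  exact step (j : ℕ) j.isLt i hij

lemma PS_linear (x w : Fin d → ℚ) (t : ℚ) (p : ℕ) :
    PS (fun i => x i + t * (x i - w i)) p = PS x p + t * (PS x p - PS w p) := by
  have key : ∀ i ∈ Finset.range p,
      (if h : i < d then (fun i => x i + t * (x i - w i)) ⟨i, h⟩ else 0)
        = (if h : i < d then x ⟨i, h⟩ else 0)
          + t * ((if h : i < d then x ⟨i, h⟩ else 0) - (if h : i < d then w ⟨i, h⟩ else 0)) := by
    intro i _
    by_cases h : i < d
    · simp only [dif_pos h]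
    · simp only [dif_neg h]; ring
  rw [PS, Finset.sum_congr rfl key, Finset.sum_add_distrib, ← Finset.mul_sum,
    Finset.sum_sub_distrib]
  rfl

lemma gp_linear (x w : Fin d → ℚ) (t : ℚ) (i : ℕ) :
    gp (fun j => x j + t * (x j - w j)) i = gp x i + t * (gp x i - gp w i) := by
  rw [gp, gp, gp]
  by_cases h : i + 1 < d
  · simp only [dif_pos h]; ring
  · simp only [dif_neg h]; ring


lemma cone_decomp (y : Fin d → ℚ) (hy : Antitone y) :
    ∀ N : ℕ, ∀ x : Fin d → ℚ, Antitone x →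
      (∀ p, p ≤ d → PS x p ≤ PS y p) → PS x d = PS y d →
      (((Finset.range (d+1)).filter (fun p => PS x p < PS y p)).card
        + ((Finset.range d).filter (fun i => 0 < gp x i)).card) ≤ N →
      ∃ t : Composition d → ℚ, (∀ L, 0 ≤ t L) ∧ (∑ L, t L) = 1 ∧
        ∀ i, x i = ∑ L : Composition d, t L * vSeq L y i := by
  classical
  intro N
  induction N using Nat.strong_induction_on with
  | _ N ih =>
  intro x hx hxy hxd hm
  -- the composition whose boundaries are the equality points
  set cs : CompositionAsSet d :=
    { boundaries := Finset.univ.filter (fun p : Fin (d+1) => PS x (p : ℕ) = PS y (p : ℕ))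
      zero_mem := by simp [PS_zero]
      getLast_mem := by simp [Fin.val_last]; exact hxd } with hcs
  set L : Composition d := cs.toComposition with hL
  set W : Fin d → ℚ := vSeq L y with hW
  -- boundary bridge
  have hbval : ∀ k : Fin (L.length + 1), ((L.boundary k : Fin (d+1)) : ℕ) = L.sizeUpTo k :=
    fun k => rfl
  have hbd : ∀ p : ℕ, p ≤ d → ((PS x p = PS y p) ↔ ∃ k, k ≤ L.length ∧ L.sizeUpTo k = p) := by
    intro p hp
    have hbnd : L.boundaries = cs.boundaries := CompositionAsSet.toComposition_boundaries cs
    constructor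
    · intro hpe
      have hmem : (⟨p, by omega⟩ : Fin (d+1)) ∈ L.boundaries := by
        rw [hbnd, hcs]
        exact Finset.mem_filter.mpr ⟨Finset.mem_univ _, hpe⟩
      rw [Composition.boundaries, Finset.mem_map] at hmem
      obtain ⟨k, _, hk⟩ := hmem
      refine ⟨(k : ℕ), by omega, ?_⟩
      have h1 : ((L.boundary k : Fin (d+1)) : ℕ) = p := by
        rw [show (L.boundary k : Fin (d+1)) = L.boundary.toEmbedding k from rfl, hk]
      rw [← hbval k, h1]
    · rintro ⟨k, hk, rfl⟩
      have hmem : L.boundary.toEmbedding ⟨k, by omega⟩ ∈ L.boundaries := by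
        rw [Composition.boundaries, Finset.mem_map]
        exact ⟨⟨k, by omega⟩, Finset.mem_univ _, rfl⟩
      rw [hbnd, hcs] at hmem
      have := (Finset.mem_filter.mp hmem).2
      exact this
  have hWb : ∀ p : ℕ, p ≤ d → PS x p = PS y p → PS W p = PS y p := by
    intro p hp hpe
    obtain ⟨k, hk, hks⟩ := (hbd p hp).mp hpe
    rw [hW, ← hks, PS_vSeq_boundary L y k hk]
  have hWd : PS W d = PS y d := PS_vSeq_univ L y
  have hgpK1 : ∀ i : ℕ, gp x i = 0 → gp W i = 0 := by
    intro i hgp0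
    by_cases hi : i + 1 < d
    · set j0 : Fin d := ⟨i, by omega⟩ with hj0
      set j1 : Fin d := ⟨i + 1, hi⟩ with hj1
      have hxx : x j0 = x j1 := by
        rw [gp, dif_pos hi] at hgp0; linarith
      by_cases hblk : L.index j1 = L.index j0
      · rw [gp, dif_pos hi]
        have : W j1 = W j0 := vSeq_congr L y hblk
        rw [show W ⟨i, by omega⟩ = W j0 from rfl, show W ⟨i+1, hi⟩ = W j1 from rfl, this]
        ring
      · -- block changes at i+1, so i+1 is a boundary ⇒ equality point
        set m2 := L.index j1 with hm2
        have e1 : L.sizeUpTo (m2 : ℕ) ≤ i + 1 := L.sizeUpTo_index_le j1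
        have e2 : i + 1 < L.sizeUpTo ((m2 : ℕ) + 1) := by
          have := L.lt_sizeUpTo_index_succ j1; rwa [Fin.val_succ] at this
        have e3 : L.sizeUpTo (m2 : ℕ) = i + 1 := by
          by_contra hne
          have h4 : L.sizeUpTo (m2 : ℕ) ≤ i := by omega
          have : L.index j0 = m2 := by
            rw [index_eq_iff]
            constructor
            · simpa using h4
            · simp only [hj0]; omega
          exact hblk (this.symm ▸ rfl)
        have hb1 : PS x (i + 1) = PS y (i + 1) :=
          (hbd (i + 1) (by omega)).mpr ⟨(m2 : ℕ), by omega, e3⟩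
        -- derive pointwise equalities
        have hps0 : PS x (i + 1) = PS x i + x j0 := PS_succ x (by omega)
        have hps0y : PS y (i + 1) = PS y i + y j0 := PS_succ y (by omega)
        have hps1 : PS x (i + 2) = PS x (i + 1) + x j1 := PS_succ x hi
        have hps1y : PS y (i + 2) = PS y (i + 1) + y j1 := PS_succ y hi
        have hxyi : PS x i ≤ PS y i := hxy i (by omega)
        have hxyi2 : PS x (i + 2) ≤ PS y (i + 2) := hxy (i + 2) (by omega)
        have hyy : y j1 ≤ y j0 := hy (by rw [Fin.le_def]; simp [hj0, hj1])
        have hy0 : x j0 = y j0 := by linarith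
        have hy1 : x j1 = y j1 := by linarith
        have hyeq : y j0 = y j1 := by linarith
        have hbi : PS x i = PS y i := by linarith
        have hbi2 : PS x (i + 2) = PS y (i + 2) := by linarith
        obtain ⟨k1, hk1len, hk1⟩ := (hbd i (by omega)).mp hbi
        obtain ⟨k3, hk3len, hk3⟩ := (hbd (i + 2) (by omega)).mp hbi2
        set m := L.index j0 with hm
        have f1 : L.sizeUpTo (m : ℕ) ≤ i := L.sizeUpTo_index_le j0
        have f2 : i < L.sizeUpTo ((m : ℕ) + 1) := by
          have := L.lt_sizeUpTo_index_succ j0; rwa [Fin.val_succ] at this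
        have hmm2 : (m : ℕ) < (m2 : ℕ) := by
          rcases lt_or_eq_of_le (index_mono L (show j0 ≤ j1 by rw [Fin.le_def]; simp [hj0, hj1])) with h' | h'
          · exact h'
          · exact absurd h'.symm hblk
        have g1 : L.sizeUpTo ((m : ℕ) + 1) = i + 1 := by
          have : L.sizeUpTo ((m : ℕ) + 1) ≤ L.sizeUpTo (m2 : ℕ) := L.monotone_sizeUpTo (by omega)
          omega
        have g2 : L.sizeUpTo (m : ℕ) = i := by
          by_contra hne
          have h5 : L.sizeUpTo (m : ℕ) < i := by omega
          have h6 : (m : ℕ) < k1 := by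
            by_contra h7
            have : L.sizeUpTo k1 ≤ L.sizeUpTo (m : ℕ) := L.monotone_sizeUpTo (by omega)
            omega
          have : L.sizeUpTo ((m : ℕ) + 1) ≤ L.sizeUpTo k1 := L.monotone_sizeUpTo (by omega)
          omega
        have g3 : L.sizeUpTo ((m2 : ℕ) + 1) = i + 2 := by
          have h6 : (m2 : ℕ) < k3 := by
            by_contra h7
            have : L.sizeUpTo k3 ≤ L.sizeUpTo (m2 : ℕ) := L.monotone_sizeUpTo (by omega)
            omega
          have : L.sizeUpTo ((m2 : ℕ) + 1) ≤ L.sizeUpTo k3 := L.monotone_sizeUpTo (by omega)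
          omega
        have w0 : W j0 = y j0 := vSeq_singleton L y j0 (by rw [← hm]; omega)
        have w1 : W j1 = y j1 := vSeq_singleton L y j1 (by rw [← hm2]; omega)
        rw [gp, dif_pos hi]
        rw [show W ⟨i, by omega⟩ = W j0 from rfl, show W ⟨i+1, hi⟩ = W j1 from rfl, w0, w1, hyeq]
        ring
    · rw [gp, dif_neg hi]
  -- membership of the perturbed vector
  have zK : ∀ t : ℚ, 0 ≤ t →
      (∀ p, p ≤ d → PS x p < PS y p → PS W p < PS x p →
        PS x p + t * (PS x p - PS W p) ≤ PS y p) →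
      (∀ i : ℕ, gp x i < gp W i → 0 ≤ gp x i + t * (gp x i - gp W i)) →
      (∀ p, p ≤ d → PS (fun i => x i + t * (x i - W i)) p ≤ PS y p)
        ∧ Antitone (fun i => x i + t * (x i - W i))
        ∧ PS (fun i => x i + t * (x i - W i)) d = PS y d := by
    intro t ht Hp Hi
    have hPS : ∀ p, PS (fun i => x i + t * (x i - W i)) p = PS x p + t * (PS x p - PS W p) :=
      PS_linear x W t
    have heq : ∀ p, p ≤ d → PS x p = PS y p →
        PS (fun i => x i + t * (x i - W i)) p = PS y p := by
      intro p hp hpe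
      rw [hPS p, hWb p hp hpe, hpe]; ring
    refine ⟨?_, ?_, heq d le_rfl hxd⟩
    · intro p hp
      rcases lt_or_eq_of_le (hxy p hp) with hlt | heqp
      · rcases le_or_gt (PS x p) (PS W p) with hle | hgt
        · rw [hPS p]; nlinarith
        · exact (hPS p) ▸ Hp p hp hlt hgt
      · rw [heq p hp heqp]
    · apply antitone_of_gp
      intro i
      rw [gp_linear]
      rcases le_or_gt (gp W i) (gp x i) with hle | hgt
      · have := gp_nonneg hx i; nlinarith
      · exact Hi i hgt
  by_cases hxw : ∀ i, x i = W i
  · -- x is exactly vSeq L y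
    refine ⟨fun L' => if L' = L then 1 else 0, fun L' => by positivity,
      by rw [Finset.sum_ite_eq' Finset.univ L (fun _ => (1:ℚ))]; simp, ?_⟩
    intro i
    rw [Finset.sum_congr rfl (fun L' _ => by
      rw [ite_mul, one_mul, zero_mul] :
        ∀ L' ∈ Finset.univ, (if L' = L then (1:ℚ) else 0) * vSeq L' y i
          = if L' = L then vSeq L' y i else 0)]
    rw [Finset.sum_ite_eq' Finset.univ L (fun L' => vSeq L' y i)]
    simp [hxw i, hW]
  · push_neg at hxw
    obtain ⟨i0, hi0⟩ := hxw
    have hd : 0 < d := i0.pos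
    -- threshold sets
    set T1 : Finset ℚ := ((Finset.range (d+1)).filter
        (fun p => PS x p < PS y p ∧ PS W p < PS x p)).image
        (fun p => (PS y p - PS x p) / (PS x p - PS W p)) with hT1
    set T2 : Finset ℚ := ((Finset.range d).filter (fun i => gp x i < gp W i)).image
        (fun i => gp x i / (gp W i - gp x i)) with hT2
    set T : Finset ℚ := T1 ∪ T2 with hT
    have hTpos : ∀ s ∈ T, 0 < s := by
      intro s hs
      rcases Finset.mem_union.mp hs with h | h
      · obtain ⟨p, hp, rfl⟩ := Finset.mem_image.mp h
        rw [Finset.mem_filter] at hp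
        exact div_pos (by linarith [hp.2.1]) (by linarith [hp.2.2])
      · obtain ⟨i, hi, rfl⟩ := Finset.mem_image.mp h
        rw [Finset.mem_filter] at hi
        have h0 : 0 ≤ gp x i := gp_nonneg hx i
        have hne : 0 < gp x i := by
          rcases lt_or_eq_of_le h0 with h' | h'
          · exact h'
          · exfalso; have := hgpK1 i h'.symm; rw [this] at hi; exact absurd hi.2 (by rw [← h']; simp)
        exact div_pos hne (by linarith [hi.2])
    have hbound : ∀ z : Fin d → ℚ, (∀ p, p ≤ d → PS z p ≤ PS y p) → Antitone z →
        PS z d = PS y d → ∀ i : Fin d,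
        y ⟨d - 1, by omega⟩ ≤ z i ∧ z i ≤ y ⟨0, hd⟩ := by
      intro z hz1 hz2 hz3 i
      have hup : z i ≤ z ⟨0, hd⟩ := hz2 (by rw [Fin.le_def]; simp)
      have h1 : PS z 1 = PS z 0 + z ⟨0, hd⟩ := PS_succ z hd
      have h1y : PS y 1 = PS y 0 + y ⟨0, hd⟩ := PS_succ y hd
      have h2 : PS z 1 ≤ PS y 1 := hz1 1 (by omega)
      have hd1 : d - 1 + 1 = d := by omega
      have h3 : PS z (d - 1 + 1) = PS z (d - 1) + z ⟨d - 1, by omega⟩ := PS_succ z (by omega)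
      have h3y : PS y (d - 1 + 1) = PS y (d - 1) + y ⟨d - 1, by omega⟩ := PS_succ y (by omega)
      have e3 : PS z (d - 1 + 1) = PS z d := by rw [hd1]
      have e3y : PS y (d - 1 + 1) = PS y d := by rw [hd1]
      have h4 : PS z (d - 1) ≤ PS y (d - 1) := hz1 (d - 1) (by omega)
      have hlo : z ⟨d - 1, by omega⟩ ≤ z i := hz2 (by rw [Fin.le_def]; simp; omega)
      rw [PS_zero] at h1 h1y
      constructor
      · have : y ⟨d - 1, by omega⟩ ≤ z ⟨d - 1, by omega⟩ := by linarith
        linarith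
      · have : z ⟨0, hd⟩ ≤ y ⟨0, hd⟩ := by linarith
        linarith
    have hTne : T.Nonempty := by
      by_contra hne
      rw [Finset.not_nonempty_iff_eq_empty, hT, Finset.union_eq_empty] at hne
      obtain ⟨he1, he2⟩ := hne
      rw [hT1, Finset.image_eq_empty, Finset.filter_eq_empty_iff] at he1
      rw [hT2, Finset.image_eq_empty, Finset.filter_eq_empty_iff] at he2
      have hall : ∀ t : ℚ, 0 ≤ t →
          (∀ p, p ≤ d → PS (fun i => x i + t * (x i - W i)) p ≤ PS y p)
          ∧ Antitone (fun i => x i + t * (x i - W i))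
          ∧ PS (fun i => x i + t * (x i - W i)) d = PS y d := by
        intro t ht
        refine zK t ht ?_ ?_
        · intro p hp h1 h2
          exact absurd ⟨h1, h2⟩ (he1 (Finset.mem_range.mpr (by omega)))
        · intro i hgt
          exfalso
          by_cases hii : i + 1 < d
          · exact absurd hgt (he2 (Finset.mem_range.mpr (by omega)))
          · rw [gp, dif_neg hii, gp, dif_neg hii] at hgt
            exact lt_irrefl 0 hgt
      set C : ℚ := y ⟨0, hd⟩ - y ⟨d - 1, by omega⟩ with hC
      have hC0 : 0 ≤ C := by
        have : y ⟨d - 1, by omega⟩ ≤ y ⟨0, hd⟩ := hy (by rw [Fin.le_def]; simp)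
        linarith
      set δ : ℚ := x i0 - W i0 with hδ
      have hδ0 : δ ≠ 0 := sub_ne_zero.mpr hi0
      have habs : 0 < |δ| := abs_pos.mpr hδ0
      set t0 : ℚ := (C + 1) / |δ| with ht0def
      have ht0 : 0 ≤ t0 := by positivity
      obtain ⟨hz1, hz2, hz3⟩ := hall t0 ht0
      obtain ⟨hb1, hb2⟩ := hbound (fun i => x i + t0 * (x i - W i)) hz1 hz2 hz3 i0
      obtain ⟨hb3, hb4⟩ := hbound x hxy hx hxd i0
      have hA : t0 * δ = (x i0 + t0 * (x i0 - W i0)) - x i0 := by rw [hδ]; ring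
      have hdiff : |t0 * δ| ≤ C := by
        rw [abs_le]
        constructor
        · rw [hA, hC]; linarith
        · rw [hA, hC]; linarith
      rw [abs_mul, abs_of_nonneg ht0, ht0def, div_mul_cancel₀ _ (ne_of_gt habs)] at hdiff
      linarith
    set s : ℚ := T.min' hTne with hsdef
    have hs : 0 < s := hTpos s (T.min'_mem hTne)
    set x' : Fin d → ℚ := fun i => x i + s * (x i - W i) with hx'
    obtain ⟨hK1, hK2, hK3⟩ := zK s (le_of_lt hs)
      (by -- Hp
        intro p hp hlt hgt
        have hmem : (PS y p - PS x p) / (PS x p - PS W p) ∈ T := by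
          rw [hT]
          apply Finset.mem_union_left
          rw [hT1]
          exact Finset.mem_image.mpr ⟨p, Finset.mem_filter.mpr
            ⟨Finset.mem_range.mpr (by omega), hlt, hgt⟩, rfl⟩
        have hle := T.min'_le _ hmem
        have hdpos : 0 < PS x p - PS W p := by linarith
        have : s * (PS x p - PS W p) ≤ ((PS y p - PS x p) / (PS x p - PS W p)) * (PS x p - PS W p) :=
          mul_le_mul_of_nonneg_right hle (le_of_lt hdpos)
        rw [div_mul_cancel₀ _ (ne_of_gt hdpos)] at this
        linarith)
      (by -- Hi
        intro i hgt
        have hd2 : i + 1 < d := by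
          by_contra h
          have : gp x i = 0 := by rw [gp, dif_neg h]
          have : gp W i = 0 := hgpK1 i this
          rw [this] at hgt
          have := gp_nonneg hx i
          linarith
        have hmem : gp x i / (gp W i - gp x i) ∈ T := by
          rw [hT]
          apply Finset.mem_union_right
          rw [hT2]
          exact Finset.mem_image.mpr ⟨i, Finset.mem_filter.mpr
            ⟨Finset.mem_range.mpr (by omega), hgt⟩, rfl⟩
        have hle := T.min'_le _ hmem
        have hdpos : 0 < gp W i - gp x i := by linarith
        have : ((gp x i) / (gp W i - gp x i)) * (gp x i - gp W i) ≤ s * (gp x i - gp W i) :=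
          mul_le_mul_of_nonpos_right hle (by linarith)
        rw [div_mul_eq_mul_div, mul_comm, ← div_mul_eq_mul_div] at this
        have heq2 : (gp x i - gp W i) / (gp W i - gp x i) = -1 := by
          rw [div_eq_iff (ne_of_gt hdpos)]; ring
        rw [heq2] at this
        linarith)
    -- measure decrease
    have hdec : (((Finset.range (d+1)).filter (fun p => PS x' p < PS y p)).card
        + ((Finset.range d).filter (fun i => 0 < gp x' i)).card)
        < (((Finset.range (d+1)).filter (fun p => PS x p < PS y p)).card
        + ((Finset.range d).filter (fun i => 0 < gp x i)).card) := by
      have hPSx' : ∀ p, PS x' p = PS x p + s * (PS x p - PS W p) := PS_linear x W s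
      have hgpx' : ∀ i, gp x' i = gp x i + s * (gp x i - gp W i) := gp_linear x W s
      have sub1 : (Finset.range (d+1)).filter (fun p => PS x' p < PS y p)
          ⊆ (Finset.range (d+1)).filter (fun p => PS x p < PS y p) := by
        intro p hp
        rw [Finset.mem_filter] at hp ⊢
        refine ⟨hp.1, ?_⟩
        have hpd : p ≤ d := by have := Finset.mem_range.mp hp.1; omega
        rcases lt_or_eq_of_le (hxy p hpd) with h' | h'
        · exact h'
        · exfalso
          have : PS x' p = PS y p := by
            rw [hPSx' p, hWb p hpd h', h']; ring
          rw [this] at hp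
          exact lt_irrefl _ hp.2
      have sub2 : (Finset.range d).filter (fun i => 0 < gp x' i)
          ⊆ (Finset.range d).filter (fun i => 0 < gp x i) := by
        intro i hi
        rw [Finset.mem_filter] at hi ⊢
        refine ⟨hi.1, ?_⟩
        rcases lt_or_eq_of_le (gp_nonneg hx i) with h' | h'
        · exact h'
        · exfalso
          have : gp x' i = 0 := by
            rw [hgpx' i, ← h', hgpK1 i h'.symm]; ring
          rw [this] at hi
          exact lt_irrefl _ hi.2
      rcases Finset.mem_union.mp (T.min'_mem hTne) with hmm | hmm
      · obtain ⟨p, hpf, hps⟩ := Finset.mem_image.mp hmm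
        rw [Finset.mem_filter] at hpf
        have hpd : p ≤ d := by have := Finset.mem_range.mp hpf.1; omega
        have hdpos : (0:ℚ) < PS x p - PS W p := by linarith [hpf.2.2]
        have hval : PS x' p = PS y p := by
          rw [hPSx' p, hsdef, ← hps, div_mul_cancel₀ _ (ne_of_gt hdpos)]; ring
        have hpmem : p ∈ (Finset.range (d+1)).filter (fun p => PS x p < PS y p) :=
          Finset.mem_filter.mpr ⟨hpf.1, hpf.2.1⟩
        have hpnot : p ∉ (Finset.range (d+1)).filter (fun p => PS x' p < PS y p) := by
          rw [Finset.mem_filter]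
          rintro ⟨-, hlt⟩
          rw [hval] at hlt
          exact lt_irrefl _ hlt
        have hc1 : ((Finset.range (d+1)).filter (fun p => PS x' p < PS y p)).card
            < ((Finset.range (d+1)).filter (fun p => PS x p < PS y p)).card :=
          Finset.card_lt_card ((Finset.ssubset_iff_of_subset sub1).mpr ⟨p, hpmem, hpnot⟩)
        have hc2 := Finset.card_le_card sub2
        omega
      · obtain ⟨i, hif, his⟩ := Finset.mem_image.mp hmm
        rw [Finset.mem_filter] at hif
        have hgpos : 0 < gp x i := by
          rcases lt_or_eq_of_le (gp_nonneg hx i) with h' | h'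
          · exact h'
          · exfalso
            have := hgpK1 i h'.symm
            rw [this] at hif
            exact absurd hif.2 (by rw [← h']; exact lt_irrefl 0)
        have hdpos : (0:ℚ) < gp W i - gp x i := by linarith [hif.2]
        have hval : gp x' i = 0 := by
          have hkey : gp x i / (gp W i - gp x i) * (gp x i - gp W i) = - gp x i := by
            rw [div_mul_eq_mul_div, div_eq_iff (ne_of_gt hdpos)]; ring
          rw [hgpx' i, hsdef, ← his, hkey]; ring
        have himem : i ∈ (Finset.range d).filter (fun i => 0 < gp x i) :=
          Finset.mem_filter.mpr ⟨hif.1, hgpos⟩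
        have hinot : i ∉ (Finset.range d).filter (fun i => 0 < gp x' i) := by
          rw [Finset.mem_filter]
          rintro ⟨-, hlt⟩
          rw [hval] at hlt
          exact lt_irrefl _ hlt
        have hc1 : ((Finset.range d).filter (fun i => 0 < gp x' i)).card
            < ((Finset.range d).filter (fun i => 0 < gp x i)).card :=
          Finset.card_lt_card ((Finset.ssubset_iff_of_subset sub2).mpr ⟨i, himem, hinot⟩)
        have hc2 := Finset.card_le_card sub1
        omega
    obtain ⟨t', ht'0, ht'1, ht'v⟩ := ih _ (by omega) x' hK2 hK1 hK3 le_rfl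
    refine ⟨fun L' => (t' L' + if L' = L then s else 0) / (1 + s), ?_, ?_, ?_⟩
    · intro L'
      apply div_nonneg _ (by linarith)
      by_cases h : L' = L
      · rw [if_pos h, h]
        linarith [ht'0 L, le_of_lt hs]
      · simp only [if_neg h, add_zero]
        exact ht'0 L'
    · rw [← Finset.sum_div, Finset.sum_add_distrib, ht'1,
        Finset.sum_ite_eq' Finset.univ L (fun _ => s)]
      simp
      field_simp
      intro h; linarith
    · intro i
      have key : ∀ L' ∈ Finset.univ,
          ((t' L' + if L' = L then s else 0) / (1 + s)) * vSeq L' y i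
            = (t' L' * vSeq L' y i + (if L' = L then s * vSeq L' y i else 0)) / (1 + s) := by
        intro L' _
        by_cases h : L' = L <;> simp [h] <;> ring
      rw [Finset.sum_congr rfl key, ← Finset.sum_div, Finset.sum_add_distrib,
        Finset.sum_ite_eq' Finset.univ L (fun L' => s * vSeq L' y i)]
      simp only [Finset.mem_univ, if_true]
      rw [← ht'v i]
      have : x' i = x i + s * (x i - W i) := rfl
      rw [this, hW]
      field_simp
      ring

lemma vSeq_smul (L : Composition d) (r : ℚ) (f : Fin d → ℚ) (i : Fin d) :
    vSeq L (fun j => r * f j) i = r * vSeq L f i := by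
  rw [vSeq, vSeq, ← mul_div_assoc, Finset.mul_sum]
  congr 1
  refine Finset.sum_congr rfl (fun j _ => ?_)
  by_cases h : L.index j = L.index i <;> simp [h]

lemma vSeq_nonneg (L : Composition d) {f : Fin d → ℚ} (hf : ∀ j, 0 ≤ f j) (i : Fin d) :
    0 ≤ vSeq L f i := by
  rw [vSeq]
  apply div_nonneg
  · apply Finset.sum_nonneg
    intro j _
    by_cases h : L.index j = L.index i <;> simp [h, hf j]
  · positivity

lemma vSeq_le_total (L : Composition d) {f : Fin d → ℚ} (hf : ∀ j, 0 ≤ f j) (i : Fin d) :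
    vSeq L f i ≤ ∑ j, f j := by
  rw [vSeq]
  have h1 : (∑ j : Fin d, if L.index j = L.index i then f j else 0) ≤ ∑ j, f j := by
    refine Finset.sum_le_sum (fun j _ => ?_)
    by_cases h : L.index j = L.index i <;> simp [h, hf j]
  have hb : (1:ℚ) ≤ (L.blocksFun (L.index i) : ℚ) := by
    exact_mod_cast L.one_le_blocksFun (L.index i)
  have h2 : (∑ j : Fin d, if L.index j = L.index i then f j else 0) ≥ 0 := by
    apply Finset.sum_nonneg
    intro j _
    by_cases h : L.index j = L.index i <;> simp [h, hf j]
  calc (∑ j : Fin d, if L.index j = L.index i then f j else 0) / (L.blocksFun (L.index i) : ℚ)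
      ≤ (∑ j : Fin d, if L.index j = L.index i then f j else 0) := div_le_self h2 hb
    _ ≤ _ := h1

lemma PS_smul (r : ℚ) (g : Fin d → ℚ) (p : ℕ) :
    PS (fun i => r * g i) p = r * PS g p := by
  rw [PS, PS, Finset.mul_sum]
  refine Finset.sum_congr rfl (fun i _ => ?_)
  by_cases h : i < d <;> simp [h]

lemma PS_nat (g : Fin d → ℕ) {n : ℕ} (h : n < d) :
    PS (fun i => (g i : ℚ)) (n + 1) = ((∑ i ∈ Finset.Iic (⟨n, h⟩ : Fin d), g i : ℕ) : ℚ) := by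
  have hset : Finset.Iic (⟨n, h⟩ : Fin d)
      = Finset.univ.filter (fun i : Fin d => (i : ℕ) < n + 1) := by
    ext i
    simp [Fin.le_def]
  rw [hset, ← sum_filter_lt (fun i => (g i : ℚ)) (show n + 1 ≤ d by omega)]
  push_cast
  rw [Finset.sum_filter]


lemma vSeq_nat_int (hd : 1 ≤ d) (a : Fin d → ℕ) (L : Composition d) (i : Fin d) :
    (((lcmUpTo d / L.blocksFun (L.index i))
        * (∑ j : Fin d, if L.index j = L.index i then a j else 0) : ℕ) : ℚ)
      = vSeq L (fun j => (lcmUpTo d * a j : ℚ)) i := by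
  have hdvd : L.blocksFun (L.index i) ∣ lcmUpTo d := by
    apply Finset.dvd_lcm (f := id)
    rw [Finset.mem_Icc]
    exact ⟨L.one_le_blocksFun _, L.blocksFun_le _⟩
  obtain ⟨q, hq⟩ := hdvd
  have hl : 0 < L.blocksFun (L.index i) := L.one_le_blocksFun _
  have hdivq : lcmUpTo d / L.blocksFun (L.index i) = q := by
    rw [hq, Nat.mul_div_cancel_left _ hl]
  have hsum : (∑ j : Fin d, if L.index j = L.index i then ((lcmUpTo d : ℚ) * (a j : ℚ)) else 0)
      = (lcmUpTo d : ℚ) * ((∑ j : Fin d, if L.index j = L.index i then a j else 0 : ℕ) : ℚ) := by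
    push_cast
    rw [Finset.mul_sum]
    refine Finset.sum_congr rfl (fun j _ => ?_)
    by_cases h : L.index j = L.index i <;> simp [h]
  rw [vSeq, hsum, hdivq, hq]
  have hlq : ((L.blocksFun (L.index i) : ℚ)) ≠ 0 := by positivity
  push_cast
  field_simp

end ConeDecomp

open ConeDecomp

/-- There is a finite set `σ(a)` of partitions of length `d` such that every partition
`b` lying in the cone `C(a)` can be written as `b = c + ∑_L m_L • v(L, μ(d)·a)` with
`c ∈ σ(a)` and nonnegative integers `m_L`, the sum running over all compositions `L` of `d`. -/
theorem finite_decomposition_in_cone (d : ℕ) (hd : 1 ≤ d) (a : Fin d → ℕ)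
    (ha_mono : Antitone a) (ha_pos : 0 < ∑ i, a i) :
    ∃ σ : Finset (Fin d → ℕ), (∀ c ∈ σ, Antitone c) ∧
      ∀ b : Fin d → ℕ, Antitone b →
        (∀ n : Fin d,
          (∑ i, a i) * (∑ i ∈ Finset.Iic n, b i) ≤ (∑ i, b i) * (∑ i ∈ Finset.Iic n, a i)) →
        ∃ c ∈ σ, ∃ m : Composition d → ℕ,
          (fun i => (b i : ℚ)) = (fun i => (c i : ℚ)) +
            ∑ L : Composition d, (m L : ℚ) • vSeq L (fun j => (lcmUpTo d * a j : ℚ)) := by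
  classical
  set μ := lcmUpTo d with hμ
  set A := ∑ i, a i with hA
  have hμpos : 0 < μ := by
    rw [hμ, lcmUpTo]
    rcases Nat.eq_zero_or_pos ((Finset.Icc 1 d).lcm id) with h | h
    · exfalso
      rw [Finset.lcm_eq_zero_iff] at h
      simp only [Set.mem_image, id] at h
      obtain ⟨k, hk, hk0⟩ := h
      rw [Finset.mem_Icc] at hk
      omega
    · exact h
  set Bound : ℕ := Fintype.card (Composition d) * (μ * A) with hBound
  set σ : Finset (Fin d → ℕ) :=
    ((Finset.univ : Finset (Fin d → Fin (Bound + 1))).image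
      (fun f => fun i => (f i : ℕ))).filter (fun c => Antitone c) with hσ
  refine ⟨σ, fun c hc => (Finset.mem_filter.mp hc).2, ?_⟩
  intro b hb hcone
  set aQ : Fin d → ℚ := fun j => (lcmUpTo d * a j : ℚ) with haQ
  have haQ0 : ∀ j, 0 ≤ aQ j := fun j => by rw [haQ]; positivity
  have haQanti : Antitone aQ := by
    intro i j hij
    simp only [haQ]
    have := ha_mono hij
    have h2 : ((a j : ℚ)) ≤ (a i : ℚ) := by exact_mod_cast this
    have : (0:ℚ) ≤ (lcmUpTo d : ℚ) := by positivity
    nlinarith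
  have haQsum : ∑ j, aQ j = (μ : ℚ) * (A : ℚ) := by
    rw [haQ, hμ, hA, ← Finset.mul_sum]
    push_cast
    ring
  by_cases hbz : ∑ i, b i = 0
  · -- b = 0
    have hb0 : ∀ i, b i = 0 := by
      intro i
      have := Finset.sum_eq_zero_iff.mp hbz
      exact this i (Finset.mem_univ i)
    have hc0 : (fun _ : Fin d => 0) ∈ σ := by
      rw [hσ, Finset.mem_filter]
      constructor
      · apply Finset.mem_image.mpr
        exact ⟨fun _ => ⟨0, by omega⟩, Finset.mem_univ _, rfl⟩
      · intro i j _; exact le_refl 0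
    refine ⟨fun _ => 0, hc0, fun _ => 0, ?_⟩
    funext i
    simp [hb0 i]
  · have hBpos : 0 < ∑ i, b i := Nat.pos_of_ne_zero hbz
    set B := ∑ i, b i with hB
    have hAQ : (0:ℚ) < (A : ℚ) := by exact_mod_cast ha_pos
    have hBQ : (0:ℚ) < (B : ℚ) := by exact_mod_cast hBpos
    set y : Fin d → ℚ := fun i => ((B : ℚ) / (A : ℚ)) * (a i : ℚ) with hy
    set x : Fin d → ℚ := fun i => (b i : ℚ) with hxdef
    have hyanti : Antitone y := by
      intro i j hij
      simp only [hy]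
      have h2 : ((a j : ℚ)) ≤ (a i : ℚ) := by exact_mod_cast ha_mono hij
      have h3 : (0:ℚ) ≤ (B:ℚ)/(A:ℚ) := by positivity
      nlinarith
    have hxanti : Antitone x := by
      intro i j hij
      simp only [hxdef]
      exact_mod_cast hb hij
    have hxy : ∀ p, p ≤ d → PS x p ≤ PS y p := by
      intro p hp
      rcases Nat.eq_zero_or_pos p with rfl | hppos
      · rw [PS_zero, PS_zero]
      · obtain ⟨n, rfl⟩ : ∃ n, p = n + 1 := ⟨p - 1, by omega⟩
        have hn : n < d := by omega
        have h1 : PS x (n + 1) = ((∑ i ∈ Finset.Iic (⟨n, hn⟩ : Fin d), b i : ℕ) : ℚ) :=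
          PS_nat b hn
        have h2 : PS y (n + 1)
            = ((B:ℚ)/(A:ℚ)) * ((∑ i ∈ Finset.Iic (⟨n, hn⟩ : Fin d), a i : ℕ) : ℚ) := by
          rw [hy, PS_smul, PS_nat a hn]
        rw [h1, h2]
        have hco := hcone ⟨n, hn⟩
        rw [div_mul_eq_mul_div, le_div_iff₀ hAQ]
        have : ((A * (∑ i ∈ Finset.Iic (⟨n, hn⟩ : Fin d), b i) : ℕ) : ℚ)
            ≤ ((B * (∑ i ∈ Finset.Iic (⟨n, hn⟩ : Fin d), a i) : ℕ) : ℚ) := by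
          exact_mod_cast hco
        push_cast at this ⊢
        linarith
    have hxd : PS x d = PS y d := by
      rw [hxdef, hy, PS_smul, PS_univ, PS_univ]
      have h1 : (∑ i, (fun i => (b i : ℚ)) i) = (B : ℚ) := by rw [hB]; push_cast; rfl
      have h2 : (∑ i, (fun i => (a i : ℚ)) i) = (A : ℚ) := by rw [hA]; push_cast; rfl
      rw [h1, h2]
      field_simp
    obtain ⟨t, ht0, ht1, htv⟩ := cone_decomp y hyanti
      (((Finset.range (d+1)).filter (fun p => PS x p < PS y p)).card
        + ((Finset.range d).filter (fun i => 0 < gp x i)).card) x hxanti hxy hxd le_rfl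
    -- rewrite vSeq L y in terms of vSeq L aQ
    have hyaQ : y = fun j => ((B : ℚ) / ((μ:ℚ) * (A : ℚ))) * aQ j := by
      funext j
      rw [hy, haQ]
      have hμQ : ((μ:ℚ)) ≠ 0 := by positivity
      push_cast
      field_simp
      ring
    have hvy : ∀ (L : Composition d) (i : Fin d),
        vSeq L y i = ((B : ℚ) / ((μ:ℚ) * (A : ℚ))) * vSeq L aQ i := by
      intro L i
      rw [hyaQ]
      exact vSeq_smul L _ aQ i
    set r : Composition d → ℚ := fun L => t L * ((B : ℚ) / ((μ:ℚ) * (A : ℚ))) with hr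
    have hr0 : ∀ L, 0 ≤ r L := by
      intro L
      rw [hr]
      have := ht0 L
      positivity
    have hbr : ∀ i, (b i : ℚ) = ∑ L : Composition d, r L * vSeq L aQ i := by
      intro i
      have := htv i
      rw [hxdef] at this
      simp only at this
      rw [this]
      refine Finset.sum_congr rfl (fun L _ => ?_)
      rw [hvy L i, hr]
      ring
    set m : Composition d → ℕ := fun L => ⌊r L⌋₊ with hm
    have hmle : ∀ L, ((m L : ℚ)) ≤ r L := fun L => Nat.floor_le (hr0 L)
    have hmlt : ∀ L, r L - (m L : ℚ) ≤ 1 := by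
      intro L
      have := Nat.lt_floor_add_one (r L)
      rw [hm]
      linarith
    have hV0 : ∀ (L : Composition d) (i : Fin d), 0 ≤ vSeq L aQ i :=
      fun L i => vSeq_nonneg L haQ0 i
    have hVle : ∀ (L : Composition d) (i : Fin d), vSeq L aQ i ≤ (μ:ℚ) * (A:ℚ) := by
      intro L i
      calc vSeq L aQ i ≤ ∑ j, aQ j := vSeq_le_total L haQ0 i
        _ = (μ:ℚ) * (A:ℚ) := haQsum
    set cQ : Fin d → ℚ := fun i => (b i : ℚ) - ∑ L : Composition d, (m L : ℚ) * vSeq L aQ i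
      with hcQdef
    have hcQ : ∀ i, cQ i = ∑ L : Composition d, (r L - (m L : ℚ)) * vSeq L aQ i := by
      intro i
      rw [hcQdef]
      simp only
      rw [hbr i, ← Finset.sum_sub_distrib]
      refine Finset.sum_congr rfl (fun L _ => ?_)
      ring
    have hcQ0 : ∀ i, 0 ≤ cQ i := by
      intro i
      rw [hcQ i]
      apply Finset.sum_nonneg
      intro L _
      have := hmle L
      have := hV0 L i
      nlinarith
    have hcQle : ∀ i, cQ i ≤ (Fintype.card (Composition d) : ℚ) * ((μ:ℚ) * (A:ℚ)) := by
      intro i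
      rw [hcQ i]
      calc ∑ L : Composition d, (r L - (m L : ℚ)) * vSeq L aQ i
          ≤ ∑ L : Composition d, (μ:ℚ) * (A:ℚ) := by
            refine Finset.sum_le_sum (fun L _ => ?_)
            have h1 := hmle L
            have h2 := hmlt L
            have h3 := hV0 L i
            have h4 := hVle L i
            nlinarith
        _ = (Fintype.card (Composition d) : ℚ) * ((μ:ℚ) * (A:ℚ)) := by
            rw [Finset.sum_const, Finset.card_univ, nsmul_eq_mul]
    have hcQanti : ∀ i j : Fin d, i ≤ j → cQ j ≤ cQ i := by
      intro i j hij
      rw [hcQ i, hcQ j]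
      refine Finset.sum_le_sum (fun L _ => ?_)
      have h1 := hmle L
      have h2 := vSeq_antitone L haQanti hij
      have h3 := hV0 L j
      nlinarith
    -- integrality
    set nV : Composition d → Fin d → ℕ := fun L i =>
      (lcmUpTo d / L.blocksFun (L.index i))
        * (∑ j : Fin d, if L.index j = L.index i then a j else 0) with hnV
    have hnVcast : ∀ L i, ((nV L i : ℚ)) = vSeq L aQ i := by
      intro L i
      rw [hnV, haQ]
      exact vSeq_nat_int hd a L i
    set nsum : Fin d → ℕ := fun i => ∑ L : Composition d, m L * nV L i with hnsum
    have hnsumcast : ∀ i, ((nsum i : ℚ)) = ∑ L : Composition d, (m L : ℚ) * vSeq L aQ i := by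
      intro i
      rw [hnsum]
      push_cast
      refine Finset.sum_congr rfl (fun L _ => ?_)
      rw [hnVcast L i]
    have hle : ∀ i, nsum i ≤ b i := by
      intro i
      have h0 := hcQ0 i
      rw [hcQdef] at h0
      simp only at h0
      rw [← hnsumcast i] at h0
      exact_mod_cast (by linarith : ((nsum i : ℚ)) ≤ ((b i : ℚ)))
    set c : Fin d → ℕ := fun i => b i - nsum i with hc
    have hccast : ∀ i, ((c i : ℚ)) = cQ i := by
      intro i
      rw [hc]
      simp only
      rw [Nat.cast_sub (hle i), hcQdef]
      simp only
      rw [hnsumcast i]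
    have hcanti : Antitone c := by
      intro i j hij
      have := hcQanti i j hij
      rw [← hccast i, ← hccast j] at this
      exact_mod_cast this
    have hcbound : ∀ i, c i < Bound + 1 := by
      intro i
      have h1 := hcQle i
      rw [← hccast i] at h1
      have h2 : ((c i : ℚ)) ≤ ((Bound : ℕ) : ℚ) := by
        rw [hBound]
        push_cast
        push_cast at h1
        linarith
      have : c i ≤ Bound := by exact_mod_cast h2
      omega
    have hcmem : c ∈ σ := by
      rw [hσ, Finset.mem_filter]
      refine ⟨?_, hcanti⟩
      apply Finset.mem_image.mpr
      refine ⟨fun i => ⟨c i, hcbound i⟩, Finset.mem_univ _, rfl⟩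
    refine ⟨c, hcmem, m, ?_⟩
    funext i
    simp only [Pi.add_apply, Finset.sum_apply, Pi.smul_apply, smul_eq_mul]
    have h1 := hccast i
    rw [hcQdef] at h1
    simp only at h1
    have h2 : x i = (b i : ℚ) := rfl
    rw [h2]
    linarith
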